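/- Let n ≥ 2, let 1 ≤ k ≤ n and α > 0. Then Γ̃_k = {λ ∈ ℝⁿ : S_m(λ) > 0 for all m = 1, 2, …, k}; that is, λ ∈ Γ_{k−1} with S_k(λ) > 0 if and only if S_m(λ) > 0 for every 1 ≤ m ≤ k. -/

import Mathlib

open scoped BigOperators

/-- The `k`-th elementary symmetric polynomial `σ_k(λ)` of `λ ∈ ℝⁿ`, indexed by `k : ℤ`,
with the conventions `σ₀ = 1` and `σ_k = 0` for `k < 0` or `k > n`. -/
noncomputable def esymmZ (n : ℕ) (k : ℤ) (lam : Fin n → ℝ) : ℝ :=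
  if k < 0 then 0 else ∑ s ∈ Finset.univ.powersetCard k.toNat, ∏ i ∈ s, lam i

/-- `S_k(λ) := σ_k(λ) + α σ_{k-1}(λ)`. -/
noncomputable def SZ (n : ℕ) (α : ℝ) (k : ℤ) (lam : Fin n → ℝ) : ℝ :=
  esymmZ n k lam + α * esymmZ n (k - 1) lam

/-- The Garding cone `Γ_m = {λ ∈ ℝⁿ : σ_j(λ) > 0 for j = 1,…,m}` (so `Γ₀ = ℝⁿ`). -/
def Gamma (n : ℕ) (m : ℕ) : Set (Fin n → ℝ) :=
  {lam | ∀ j : ℕ, 1 ≤ j → j ≤ m → 0 < esymmZ n j lam}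

/-- `Γ̃_k := Γ_{k-1} ∩ {λ : S_k(λ) > 0}`. -/
def GammaTilde (n : ℕ) (α : ℝ) (k : ℕ) : Set (Fin n → ℝ) :=
  Gamma n (k - 1) ∩ {lam | 0 < SZ n α k lam}

/-- `σ_k(λ|i)`: the `k`-th elementary symmetric polynomial of the vector obtained
from `λ` by deleting the entry `λ_i`. -/
noncomputable def esymmDel (n : ℕ) (k : ℤ) (lam : Fin n → ℝ) (i : Fin n) : ℝ :=
  if k < 0 then 0 else
    ∑ s ∈ (Finset.univ.erase i).powersetCard k.toNat, ∏ j ∈ s, lam j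

/-- `S_k(λ|i) := σ_k(λ|i) + α σ_{k-1}(λ|i)`.  In particular
`S_k^{ii}(λ) = ∂S_k/∂λ_i = S_{k-1}(λ|i) = SDel n α (k-1) lam i`. -/
noncomputable def SDel (n : ℕ) (α : ℝ) (k : ℤ) (lam : Fin n → ℝ) (i : Fin n) : ℝ :=
  esymmDel n k lam i + α * esymmDel n (k - 1) lam i

/-- `σ_k(λ|pq)`: the `k`-th elementary symmetric polynomial of the vector obtained
from `λ` by deleting the entries `λ_p` and `λ_q`. -/
noncomputable def esymmDel2 (n : ℕ) (k : ℤ) (lam : Fin n → ℝ) (p q : Fin n) : ℝ :=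
  if k < 0 then 0 else
    ∑ s ∈ ((Finset.univ.erase p).erase q).powersetCard k.toNat, ∏ l ∈ s, lam l

/-- `S_k^{pp,qq}(λ) = ∂²S_k/∂λ_p∂λ_q`, which equals
`σ_{k-2}(λ|pq) + α σ_{k-3}(λ|pq)` for `p ≠ q`, and `0` for `p = q`. -/
noncomputable def Spq (n : ℕ) (α : ℝ) (k : ℤ) (lam : Fin n → ℝ) (p q : Fin n) : ℝ :=
  if p = q then 0 else esymmDel2 n (k - 2) lam p q + α * esymmDel2 n (k - 3) lam p q


/- ===================== Auxiliary machinery ===================== -/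

namespace GTaux
open Polynomial



lemma esymm_zero (s : Multiset ℝ) : s.esymm 0 = 1 := by
  simp [Multiset.esymm]

lemma esymm_cons (a : ℝ) (s : Multiset ℝ) (m : ℕ) :
    (a ::ₘ s).esymm (m + 1) = s.esymm (m + 1) + a * s.esymm m := by
  simp [Multiset.esymm, Multiset.powersetCard_cons, Multiset.map_map, Function.comp_def,
    Multiset.sum_map_mul_left]

lemma esymm_cons' (a : ℝ) (s : Multiset ℝ) (m : ℕ) (hm : 1 ≤ m) :
    (a ::ₘ s).esymm m = s.esymm m + a * s.esymm (m - 1) := by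
  obtain ⟨m, rfl⟩ := Nat.exists_eq_add_of_le hm
  rw [add_comm 1 m]
  simpa using esymm_cons a s m

lemma esymm_eq_zero (s : Multiset ℝ) {m : ℕ} (h : Multiset.card s < m) :
    s.esymm m = 0 := by
  simp [Multiset.esymm, Multiset.powersetCard_eq_empty _ h]

lemma esymm_card (s : Multiset ℝ) : s.esymm (Multiset.card s) = s.prod := by
  induction s using Multiset.induction_on with
  | empty => simp [esymm_zero]
  | cons a u ih =>
    rw [Multiset.card_cons, esymm_cons, esymm_eq_zero u (by simp), ih]
    simp [Multiset.prod_cons]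

lemma esymm_pos (s : Multiset ℝ) (hpos : ∀ x ∈ s, 0 < x) {m : ℕ}
    (hm : m ≤ Multiset.card s) : 0 < s.esymm m := by
  rw [Multiset.esymm]
  have hne : (Multiset.powersetCard m s) ≠ 0 := by
    rw [← Multiset.card_pos, Multiset.card_powersetCard]
    exact Nat.choose_pos hm
  obtain ⟨t, ht⟩ := Multiset.exists_mem_of_ne_zero hne
  have hmemt := ht
  rw [Multiset.mem_powersetCard] at hmemt
  have hprodpos : ∀ x ∈ (Multiset.powersetCard m s).map Multiset.prod, 0 < x := by
    intro x hx
    rw [Multiset.mem_map] at hx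
    obtain ⟨u, hu, rfl⟩ := hx
    rw [Multiset.mem_powersetCard] at hu
    exact Multiset.prod_pos fun y hy => hpos y (Multiset.mem_of_le hu.1 hy)
  have h1 : t.prod ∈ (Multiset.powersetCard m s).map Multiset.prod :=
    Multiset.mem_map_of_mem _ ht
  calc (0:ℝ) < t.prod := hprodpos _ h1
    _ ≤ _ := Multiset.single_le_sum (fun x hx => (hprodpos x hx).le) _ h1



/-- The monic polynomial with roots `-a`, `a ∈ s`. -/
noncomputable def pol (s : Multiset ℝ) : ℝ[X] := (s.map fun a => X + C a).prod

lemma pol_monic (s : Multiset ℝ) : (pol s).Monic := by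
  apply monic_multiset_prod_of_monic
  intro a _
  exact monic_X_add_C _

lemma pol_natDegree (s : Multiset ℝ) : (pol s).natDegree = Multiset.card s := by
  rw [pol, natDegree_multiset_prod_of_monic]
  · simp [Multiset.map_map, Function.comp_def, natDegree_X_add_C]
  · intro f hf
    rw [Multiset.mem_map] at hf
    obtain ⟨a, _, rfl⟩ := hf
    exact monic_X_add_C a

lemma pol_coeff (s : Multiset ℝ) {k : ℕ} (h : k ≤ Multiset.card s) :
    (pol s).coeff k = s.esymm (Multiset.card s - k) :=
  Multiset.prod_X_add_C_coeff s h

lemma pol_roots (s : Multiset ℝ) : (pol s).roots = s.map Neg.neg := by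
  have : pol s = ((s.map Neg.neg).map fun a => X - C a).prod := by
    rw [pol, Multiset.map_map]
    congr 1
    apply Multiset.map_congr rfl
    intro a _
    simp [sub_neg_eq_add]
  rw [this, roots_multiset_prod_X_sub_C]




lemma pol_shift (s : Multiset ℝ) (t : ℝ) :
    pol (s.map (· + t)) = (pol s).comp (X + C t) := by
  rw [pol, pol, multiset_prod_comp, Multiset.map_map, Multiset.map_map]
  apply congrArg
  apply Multiset.map_congr rfl
  intro a _
  simp [add_comp, map_add, add_assoc, add_comm (C a) (C t)]

lemma esymm_shift (s : Multiset ℝ) (j : ℕ) (hj : j ≤ Multiset.card s) (t : ℝ) :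
    (s.map (· + t)).esymm j
      = ∑ d ∈ Finset.range (j + 1),
          ((Multiset.card s - j + d).choose d : ℝ) * s.esymm (j - d) * t ^ d := by
  classical
  set N := Multiset.card s with hN
  have hcard : Multiset.card (s.map (· + t)) = N := by simp [hN]
  have h1 : (s.map (· + t)).esymm j = (pol (s.map (· + t))).coeff (N - j) := by
    rw [pol_coeff _ (by omega), hcard]
    congr 1
    omega
  rw [h1, pol_shift, ← taylor_apply, taylor_coeff]
  have hdeg : (hasseDeriv (N - j) (pol s)).natDegree < j + 1 := by
    have := natDegree_hasseDeriv_le (pol s) (N - j)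
    rw [pol_natDegree] at this
    omega
  rw [eval_eq_sum_range' hdeg]
  apply Finset.sum_congr rfl
  intro d hd
  rw [Finset.mem_range] at hd
  have hdj : d ≤ j := by omega
  rw [hasseDeriv_coeff, pol_coeff s (k := d + (N - j)) (by omega)]
  have e1 : N - (d + (N - j)) = j - d := by omega
  have e2 : (d + (N - j)).choose (N - j) = (N - j + d).choose d := by
    rw [add_comm]
    have := Nat.choose_symm (n := N - j + d) (k := d) (by omega)
    rw [← this]
    congr 1
    omega
  rw [e1, e2]




lemma sq_dist_sum (u : Multiset ℝ) (a : ℝ) :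
    (u.map fun x => (a - x) ^ 2).sum
      = (Multiset.card u : ℝ) * a ^ 2 - 2 * a * u.sum + (u.map fun x => x ^ 2).sum := by
  induction u using Multiset.induction_on with
  | empty => simp
  | cons b u ih => simp [Multiset.sum_cons, ih]; push_cast; ring

lemma two_mul_a_sum_le (u : Multiset ℝ) (a : ℝ) :
    2 * a * u.sum ≤ (Multiset.card u : ℝ) * a ^ 2 + (u.map fun x => x ^ 2).sum := by
  have h := Multiset.sum_nonneg (s := u.map fun x => (a - x) ^ 2)
    (fun x hx => by
      rw [Multiset.mem_map] at hx; obtain ⟨y, _, rfl⟩ := hx; positivity)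
  rw [sq_dist_sum] at h
  linarith

lemma sum_sq_identity (s : Multiset ℝ) :
    s.sum ^ 2 = (s.map fun x => x ^ 2).sum + 2 * s.esymm 2 := by
  induction s using Multiset.induction_on with
  | empty => simp [esymm_zero, Multiset.esymm, Multiset.powersetCard_zero_right]
  | cons a u ih =>
    have h1 : Multiset.esymm (a ::ₘ u) 2 = u.esymm 2 + a * u.esymm 1 := esymm_cons a u 1
    have h2 : u.esymm 1 = u.sum := by
      simp [Multiset.esymm, Multiset.powersetCard_one, Multiset.map_map, Function.comp_def]
    rw [Multiset.sum_cons, Multiset.map_cons, Multiset.sum_cons, h1, h2]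
    nlinarith [ih]

lemma esymm2_le (s : Multiset ℝ) :
    2 * s.esymm 2 ≤ ((Multiset.card s : ℝ) - 1) * (s.map fun x => x ^ 2).sum := by
  induction s using Multiset.induction_on with
  | empty => simp [Multiset.esymm, Multiset.powersetCard_zero_right]
  | cons a u ih =>
    have h1 : Multiset.esymm (a ::ₘ u) 2 = u.esymm 2 + a * u.esymm 1 := esymm_cons a u 1
    have h2 : u.esymm 1 = u.sum := by
      simp [Multiset.esymm, Multiset.powersetCard_one, Multiset.map_map, Function.comp_def]
    have h3 := two_mul_a_sum_le u a
    rw [h1, h2, Multiset.map_cons, Multiset.sum_cons, Multiset.card_cons]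
    push_cast
    nlinarith [ih]

/-- Newton's inequality in the case `m = 1`. -/
lemma newton_one (s : Multiset ℝ) (h2 : 2 ≤ Multiset.card s) :
    ((Multiset.card s).choose 1 : ℝ) ^ 2 * (s.esymm 0 * s.esymm 2)
      ≤ ((Multiset.card s).choose 0 : ℝ) * ((Multiset.card s).choose 2 : ℝ)
        * s.esymm 1 ^ 2 := by
  set n := Multiset.card s with hn
  have hs1 : s.esymm 1 = s.sum := by
    simp [Multiset.esymm, Multiset.powersetCard_one, Multiset.map_map, Function.comp_def]
  have hQ : s.sum ^ 2 = (s.map fun x => x ^ 2).sum + 2 * s.esymm 2 := sum_sq_identity s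
  have hB : 2 * s.esymm 2 ≤ ((n : ℝ) - 1) * (s.map fun x => x ^ 2).sum := esymm2_le s
  have hC : s.sum ^ 2 ≤ (n : ℝ) * (s.map fun x => x ^ 2).sum := by nlinarith
  rw [esymm_zero, hs1, Nat.choose_one_right, Nat.choose_zero_right, Nat.cast_choose_two]
  have hn1 : (1:ℝ) ≤ (n:ℝ) := by exact_mod_cast Nat.one_le_of_lt h2
  nlinarith [mul_le_mul_of_nonneg_left hC (by positivity : (0:ℝ) ≤ (n:ℝ))]




lemma esymm_inv : ∀ (s : Multiset ℝ), (∀ x ∈ s, x ≠ 0) → ∀ j ≤ Multiset.card s,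
    s.esymm (Multiset.card s - j) = s.prod * (s.map (·⁻¹)).esymm j := by
  intro s
  induction s using Multiset.induction_on with
  | empty =>
    intro _ j hj
    simp only [Multiset.card_zero, Nat.le_zero] at hj
    subst hj
    simp [esymm_zero]
  | cons a u ih =>
    intro hne j hj
    have ha : a ≠ 0 := hne a (Multiset.mem_cons_self a u)
    have hneu : ∀ x ∈ u, x ≠ 0 := fun x hx => hne x (Multiset.mem_cons_of_mem hx)
    have hprodne : (a ::ₘ u).prod ≠ 0 := by
      rw [Ne, Multiset.prod_eq_zero_iff]
      intro h0
      exact hne 0 h0 rfl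
    set n := Multiset.card u with hn
    rw [Multiset.card_cons] at hj ⊢
    rcases Nat.eq_or_lt_of_le hj with hj1 | hj2
    · -- j = n + 1
      subst hj1
      rw [Nat.sub_self, esymm_zero]
      have h1 : Multiset.card ((a ::ₘ u).map (·⁻¹)) = n + 1 := by simp [hn]
      have h2 : ((a ::ₘ u).map (·⁻¹)).esymm (n + 1) = ((a ::ₘ u).map (·⁻¹)).prod := by
        rw [← h1, esymm_card]
      rw [h2, Multiset.prod_map_inv', mul_inv_cancel₀ hprodne]
    · have hjn : j ≤ n := by omega
      rcases Nat.eq_zero_or_pos j with rfl | hj0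
      · rw [Nat.sub_zero, esymm_zero, mul_one, ← Multiset.card_cons a u, esymm_card]
      · have e1 : n + 1 - j = (n - j) + 1 := by omega
        rw [e1, esymm_cons]
        have ihj : u.esymm (n - j) = u.prod * (u.map (·⁻¹)).esymm j := ih hneu j hjn
        have e2 : n - j + 1 = n - (j - 1) := by omega
        have ihj' : u.esymm (n - j + 1) = u.prod * (u.map (·⁻¹)).esymm (j - 1) := by
          rw [e2]; exact ih hneu (j - 1) (by omega)
        rw [ihj, ihj', Multiset.map_cons, Multiset.prod_cons, esymm_cons' _ _ j hj0]
        field_simp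
        ring


/-- top case of Newton: `m + 1 = card s` -/
lemma newton_top (s : Multiset ℝ) (h2 : 2 ≤ Multiset.card s) :
    ((Multiset.card s).choose (Multiset.card s - 1) : ℝ) ^ 2
        * (s.esymm (Multiset.card s - 2) * s.esymm (Multiset.card s))
      ≤ ((Multiset.card s).choose (Multiset.card s - 2) : ℝ)
        * ((Multiset.card s).choose (Multiset.card s) : ℝ)
        * s.esymm (Multiset.card s - 1) ^ 2 := by
  set n := Multiset.card s with hn
  by_cases hz : (0:ℝ) ∈ s
  · have h0 : s.esymm n = 0 := by
      rw [hn, esymm_card, Multiset.prod_eq_zero_iff.mpr hz]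
    rw [h0, mul_zero, mul_zero]
    positivity
  · have hne : ∀ x ∈ s, x ≠ 0 := fun x hx h0 => hz (h0 ▸ hx)
    set v := s.map (·⁻¹) with hv
    have hcv : Multiset.card v = n := by simp [hv, hn]
    have h1 := newton_one v (by omega)
    rw [hcv] at h1
    have e0 : s.esymm n = s.prod := hn ▸ esymm_card s
    have e0' : s.esymm n = s.prod * v.esymm 0 := by rw [esymm_zero, mul_one, e0]
    have e1 : s.esymm (n - 1) = s.prod * v.esymm 1 := esymm_inv s hne 1 (by omega)
    have e2 : s.esymm (n - 2) = s.prod * v.esymm 2 := esymm_inv s hne 2 (by omega)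
    have c1 : n.choose (n - 1) = n.choose 1 := by
      rw [← Nat.choose_symm (by omega : 1 ≤ n)]
    have c2 : n.choose (n - 2) = n.choose 2 := by
      rw [← Nat.choose_symm (by omega : 2 ≤ n)]
    have c3 : n.choose n = n.choose 0 := by
      rw [Nat.choose_self, Nat.choose_zero_right]
    rw [c1, c2, c3, e0', e1, e2]
    have hsq : (0:ℝ) ≤ s.prod ^ 2 := sq_nonneg _
    nlinarith [mul_le_mul_of_nonneg_left h1 hsq]




lemma deriv_step (s : Multiset ℝ) (hc : 1 ≤ Multiset.card s) :
    ∃ t : Multiset ℝ, Multiset.card t = Multiset.card s - 1 ∧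
      ∀ j ≤ Multiset.card s - 1,
        (Multiset.card s : ℝ) * t.esymm j
          = ((Multiset.card s - j : ℕ) : ℝ) * s.esymm j := by
  classical
  set N := Multiset.card s with hN
  set P := pol s with hP
  have hmon : P.Monic := pol_monic s
  have hdegP : P.natDegree = N := pol_natDegree s
  set d := derivative P with hd
  have hcoefftop : d.coeff (N - 1) = (N : ℝ) := by
    rw [hd, coeff_derivative]
    have e : N - 1 + 1 = N := by omega
    rw [e]
    have : P.coeff N = 1 := by
      have := hmon.coeff_natDegree
      rwa [hdegP] at this
    rw [this, one_mul]
    exact_mod_cast (by omega : N - 1 + 1 = N)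
  have hNne : ((N : ℝ)) ≠ 0 := by
    have : (0:ℕ) < N := hc
    positivity
  have hdne : d ≠ 0 := fun h0 => hNne (by rw [← hcoefftop, h0, coeff_zero])
  have hdeg_ge : N - 1 ≤ d.natDegree :=
    le_natDegree_of_ne_zero (by rw [hcoefftop]; exact hNne)
  have hdeg_le : d.natDegree ≤ N - 1 := by
    have := natDegree_derivative_le P
    rwa [hdegP] at this
  have hdeg : d.natDegree = N - 1 := le_antisymm hdeg_le hdeg_ge
  have hrootsP : Multiset.card P.roots = N := by
    rw [hP, pol_roots, Multiset.card_map, hN]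
  have hr_ge : N - 1 ≤ Multiset.card d.roots := by
    have h := card_roots_le_derivative P
    rw [← hd] at h
    omega
  have hr_le : Multiset.card d.roots ≤ N - 1 := by
    have := card_roots' d
    omega
  have hr : Multiset.card d.roots = N - 1 := le_antisymm hr_le hr_ge
  have hfact : C d.leadingCoeff * (d.roots.map fun a => X - C a).prod = d :=
    C_leadingCoeff_mul_prod_multiset_X_sub_C (by rw [hr, hdeg])
  have hlead : d.leadingCoeff = (N : ℝ) := by
    rw [leadingCoeff, hdeg, hcoefftop]
  refine ⟨d.roots.map Neg.neg, by simp [hr], ?_⟩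
  intro j hj
  have hcardt : Multiset.card (d.roots.map Neg.neg) = N - 1 := by simp [hr]
  have hpolt : pol (d.roots.map Neg.neg) = (d.roots.map fun a => X - C a).prod := by
    rw [pol, Multiset.map_map]
    congr 1
    apply Multiset.map_congr rfl
    intro a _
    simp [sub_eq_add_neg]
  have hfact' : d = C (N:ℝ) * pol (d.roots.map Neg.neg) := by
    rw [hpolt, ← hlead, hfact]
  have h1 : d.coeff (N - 1 - j) = (N:ℝ) * (d.roots.map Neg.neg).esymm j := by
    conv_lhs => rw [hfact']
    rw [coeff_C_mul, pol_coeff _ (k := N - 1 - j) (by rw [hcardt]; omega), hcardt]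
    have e : N - 1 - (N - 1 - j) = j := by omega
    rw [e]
  have h2 : d.coeff (N - 1 - j) = ((N - j : ℕ) : ℝ) * s.esymm j := by
    rw [hd, coeff_derivative]
    have e : N - 1 - j + 1 = N - j := by omega
    rw [e, hP, pol_coeff _ (k := N - j) (by omega)]
    have e2 : Multiset.card s - (N - j) = j := by omega
    rw [e2]
    have ecast : ((N - 1 - j : ℕ) : ℝ) + 1 = ((N - j : ℕ) : ℝ) := by
      exact_mod_cast (by omega : N - 1 - j + 1 = N - j)
    rw [ecast]
    ring
  rw [← h1, h2]





lemma choose_deriv (N j : ℕ) (hN : 1 ≤ N) :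
    N.choose j * (N - j) = N * (N - 1).choose j := by
  have h1 := Nat.choose_succ_right_eq N j
  have h2 := Nat.add_one_mul_choose_eq (N - 1) j
  rw [Nat.sub_add_cancel hN] at h2
  exact (h2.trans h1).symm

/-- Newton's inequality. -/
lemma newton : ∀ (N : ℕ) (s : Multiset ℝ) (m : ℕ), 1 ≤ m → Multiset.card s = N →
    m + 1 ≤ N →
    ((N.choose m : ℝ)) ^ 2 * (s.esymm (m - 1) * s.esymm (m + 1))
      ≤ (N.choose (m - 1) : ℝ) * (N.choose (m + 1) : ℝ) * s.esymm m ^ 2 := by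
  intro N
  induction N using Nat.strong_induction_on with
  | _ N ih =>
    intro s m hm hcard hmN
    rcases eq_or_lt_of_le hmN with htop | hlt
    · -- m + 1 = N : top case
      have h2 : 2 ≤ Multiset.card s := by omega
      have h := newton_top s h2
      rw [hcard] at h
      have e1 : N - 1 = m := by omega
      have e2 : N - 2 = m - 1 := by omega
      have e4 : m + 1 = N := by omega
      rw [e1, e2] at h
      rw [e4]
      exact h
    · -- m + 1 < N : derivative step
      obtain ⟨t, hct, hE⟩ := deriv_step s (by omega)
      rw [hcard] at hct hE
      have IH := ih (N - 1) (by omega) t m hm (by omega) (by omega)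
      have hNpos : (0:ℝ) < (N:ℝ) := by
        have : 0 < N := by omega
        exact_mod_cast this
      have h1 := hE (m - 1) (by omega)
      have h2 := hE m (by omega)
      have h3 := hE (m + 1) (by omega)
      have hx : t.esymm (m - 1) = ((N - (m - 1) : ℕ) : ℝ) * s.esymm (m - 1) / N := by
        rw [eq_div_iff hNpos.ne']
        linear_combination h1
      have hy : t.esymm m = ((N - m : ℕ) : ℝ) * s.esymm m / N := by
        rw [eq_div_iff hNpos.ne']
        linear_combination h2
      have hz : t.esymm (m + 1) = ((N - (m + 1) : ℕ) : ℝ) * s.esymm (m + 1) / N := by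
        rw [eq_div_iff hNpos.ne']
        linear_combination h3
      have hA : ((N - 1).choose m : ℝ)
          = (N.choose m : ℝ) * ((N - m : ℕ) : ℝ) / N := by
        rw [eq_div_iff hNpos.ne']
        have hh := choose_deriv N m (by omega)
        exact_mod_cast (Nat.mul_comm ((N-1).choose m) N).trans hh.symm
      have hB : ((N - 1).choose (m - 1) : ℝ)
          = (N.choose (m - 1) : ℝ) * ((N - (m - 1) : ℕ) : ℝ) / N := by
        rw [eq_div_iff hNpos.ne']
        have hh := choose_deriv N (m - 1) (by omega)
        exact_mod_cast (Nat.mul_comm ((N-1).choose (m - 1)) N).trans hh.symm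
      have hC : ((N - 1).choose (m + 1) : ℝ)
          = (N.choose (m + 1) : ℝ) * ((N - (m + 1) : ℕ) : ℝ) / N := by
        rw [eq_div_iff hNpos.ne']
        have hh := choose_deriv N (m + 1) (by omega)
        exact_mod_cast (Nat.mul_comm ((N-1).choose (m + 1)) N).trans hh.symm
      rw [hx, hy, hz, hA, hB, hC] at IH
      have hc1 : (0:ℝ) < ((N - (m - 1) : ℕ) : ℝ) := by
        have : 0 < N - (m - 1) := by omega
        exact_mod_cast this
      have hc2 : (0:ℝ) < ((N - m : ℕ) : ℝ) := by
        have : 0 < N - m := by omega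
        exact_mod_cast this
      have hc3 : (0:ℝ) < ((N - (m + 1) : ℕ) : ℝ) := by
        have : 0 < N - (m + 1) := by omega
        exact_mod_cast this
      have hKpos : (0:ℝ) < ((N - (m - 1) : ℕ) : ℝ) * ((N - (m + 1) : ℕ) : ℝ)
          * ((N - m : ℕ) : ℝ) ^ 2 / (N:ℝ) ^ 4 := by positivity
      refine (mul_le_mul_iff_left₀ hKpos).mp ?_
      calc (N.choose m : ℝ) ^ 2 * (s.esymm (m - 1) * s.esymm (m + 1))
            * (((N - (m - 1) : ℕ) : ℝ) * ((N - (m + 1) : ℕ) : ℝ)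
              * ((N - m : ℕ) : ℝ) ^ 2 / (N:ℝ) ^ 4)
          = ((N.choose m : ℝ) * ((N - m : ℕ) : ℝ) / N) ^ 2
            * (((N - (m - 1) : ℕ) : ℝ) * s.esymm (m - 1) / N
              * (((N - (m + 1) : ℕ) : ℝ) * s.esymm (m + 1) / N)) := by
            field_simp
        _ ≤ (N.choose (m - 1) : ℝ) * ((N - (m - 1) : ℕ) : ℝ) / N
            * ((N.choose (m + 1) : ℝ) * ((N - (m + 1) : ℕ) : ℝ) / N)
            * (((N - m : ℕ) : ℝ) * s.esymm m / N) ^ 2 := IH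
        _ = (N.choose (m - 1) : ℝ) * (N.choose (m + 1) : ℝ) * s.esymm m ^ 2
            * (((N - (m - 1) : ℕ) : ℝ) * ((N - (m + 1) : ℕ) : ℝ)
              * ((N - m : ℕ) : ℝ) ^ 2 / (N:ℝ) ^ 4) := by
            field_simp



lemma esymm_nonneg_of (s : Multiset ℝ) (j : ℕ)
    (h : ∀ m, 1 ≤ m → m ≤ j → 0 < s.esymm m) (d : ℕ) (hd : d ≤ j) :
    0 ≤ s.esymm (j - d) := by
  rcases Nat.eq_or_lt_of_le hd with rfl | hlt
  · rw [Nat.sub_self, esymm_zero]; norm_num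
  · exact (h (j - d) (by omega) (by omega)).le

lemma shift_pos (s : Multiset ℝ) (j : ℕ) (hj1 : 1 ≤ j) (hj : j ≤ Multiset.card s)
    (h : ∀ m, 1 ≤ m → m ≤ j → 0 < s.esymm m) (t : ℝ) (ht : 0 ≤ t) :
    0 < (s.map (· + t)).esymm j := by
  rw [esymm_shift s j hj t]
  have h0 : (0:ℕ) ∈ Finset.range (j + 1) := by simp
  apply Finset.sum_pos'
  · intro d hd
    rw [Finset.mem_range] at hd
    have := esymm_nonneg_of s j h d (by omega)
    positivity
  · refine ⟨0, h0, ?_⟩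
    simp only [Nat.choose_zero_right, Nat.cast_one, one_mul, pow_zero, mul_one, Nat.sub_zero]
    exact h j hj1 le_rfl

/-- The key lemma: if `S_m = σ_m + a σ_{m-1} > 0` for `1 ≤ m ≤ k` (i.e. the elementary
symmetric polynomials of `a ::ₘ s` are positive up to level `k`) with `a > 0`, then
the elementary symmetric polynomials of `s` are positive up to level `k - 1`. -/
lemma key : ∀ k : ℕ, ∀ (s : Multiset ℝ) (a : ℝ), 0 < a → k ≤ Multiset.card s + 1 →
    (∀ m, 1 ≤ m → m ≤ k → 0 < (a ::ₘ s).esymm m) →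
    ∀ j, 1 ≤ j → j ≤ k - 1 → 0 < s.esymm j := by
  intro k
  induction k using Nat.strong_induction_on with
  | _ k ihk =>
    intro s a ha hk H j hj1 hj2
    rcases Nat.lt_or_ge j (k - 1) with hjlt | hjge
    · -- use the induction hypothesis at level j + 1 < k
      exact ihk (j + 1) (by omega) s a ha (by omega)
        (fun m hm1 hm2 => H m hm1 (by omega)) j hj1 (by omega)
    · have hjk : j = k - 1 := by omega
      subst hjk
      have hk2 : 2 ≤ k := by omega
      set N := Multiset.card s with hN
      have hkN : k ≤ N + 1 := hk
      -- the function g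
      set g : ℝ → ℝ := fun t => ∑ d ∈ Finset.range (k - 1 + 1),
          ((N - (k - 1) + d).choose d : ℝ) * s.esymm (k - 1 - d) * t ^ d with hg
      have hgg : ∀ t : ℝ, (s.map (· + t)).esymm (k - 1) = g t := by
        intro t
        rw [esymm_shift s (k - 1) (by omega) t]
      have hgcont : Continuous g := by
        apply continuous_finset_sum
        intro d _
        exact (continuous_const.mul (continuous_pow d))
      -- g never vanishes on [0, ∞)
      have hgne : ∀ t : ℝ, 0 ≤ t → g t ≠ 0 := by
        intro t ht h0
        set s' := s.map (· + t) with hs'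
        have hcs' : Multiset.card s' = N := by simp [hs', hN]
        set a' := a + t with ha'
        have ha'pos : 0 < a' := by positivity
        have hcons : a' ::ₘ s' = (a ::ₘ s).map (· + t) := by
          simp [hs', ha', Multiset.map_cons]
        have hcards : Multiset.card (a ::ₘ s) = N + 1 := by simp [hN]
        -- positivity of esymm of the shifted extended multiset
        have hν : ∀ m, 1 ≤ m → m ≤ k → 0 < (a' ::ₘ s').esymm m := by
          intro m hm1 hm2
          rw [hcons]
          exact shift_pos (a ::ₘ s) m hm1 (by omega)
            (fun i hi1 hi2 => H i hi1 (by omega)) t ht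
        -- esymm of s' up to k - 2 are positive
        have hs'pos : ∀ i, 1 ≤ i → i ≤ k - 2 → 0 < s'.esymm i := by
          intro i hi1 hi2
          exact ihk (k - 1) (by omega) s' a' ha'pos (by omega)
            (fun m hm1 hm2 => hν m hm1 (by omega)) i hi1 (by omega)
        have hgt0 : s'.esymm (k - 1) = 0 := by rw [hs', hgg t]; exact h0
        have hs'k2pos : 0 < s'.esymm (k - 2) := by
          rcases Nat.eq_or_lt_of_le hk2 with h2 | h2
          · rw [← h2]
            simpa using (esymm_zero s').symm ▸ (by rw [esymm_zero s']; norm_num : (0:ℝ) < s'.esymm 0)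
          · exact hs'pos (k - 2) (by omega) le_rfl
        have hsk' : (a' ::ₘ s').esymm k = s'.esymm k + a' * s'.esymm (k - 1) :=
          esymm_cons' a' s' k (by omega)
        have hesk : 0 < (a' ::ₘ s').esymm k := hν k (by omega) le_rfl
        rcases Nat.lt_or_ge N k with hNk | hNk
        · -- k = N + 1 : σ_k(s') = 0 and σ_{k-1}(s') = 0, contradiction
          have : s'.esymm k = 0 := esymm_eq_zero s' (by omega)
          rw [hsk', this, hgt0] at hesk
          simp at hesk
        · -- k ≤ N : Newton's inequality
          have hnew := newton N s' (k - 1) (by omega) hcs' (by omega)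
          have e1 : k - 1 + 1 = k := by omega
          rw [hgt0, e1] at hnew
          have hchoosepos : (0:ℝ) < (N.choose (k - 1) : ℝ) := by
            exact_mod_cast Nat.choose_pos (by omega : k - 1 ≤ N)
          have hA2 : (0:ℝ) < (N.choose (k - 1) : ℝ) ^ 2 := by positivity
          have hle : s'.esymm (k - 1 - 1) * s'.esymm k ≤ 0 := by
            nlinarith [hnew, hA2]
          have e2 : k - 1 - 1 = k - 2 := by omega
          rw [e2] at hle
          have hk0 : s'.esymm k ≤ 0 := by
            by_contra hpos
            push_neg at hpos
            nlinarith
          rw [hsk', hgt0, mul_zero, add_zero] at hesk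
          linarith
      -- g is eventually positive
      obtain ⟨T, hT0, hgT⟩ : ∃ T : ℝ, 0 ≤ T ∧ 0 < g T := by
        set T := 1 + (s.map abs).sum with hT
        have habs : ∀ x ∈ s, (0:ℝ) ≤ |x| := fun x _ => abs_nonneg x
        have hsumnn : 0 ≤ (s.map abs).sum := Multiset.sum_nonneg (by
          intro x hx
          rw [Multiset.mem_map] at hx
          obtain ⟨y, _, rfl⟩ := hx
          exact abs_nonneg y)
        refine ⟨T, by positivity, ?_⟩
        rw [← hgg T]
        apply esymm_pos
        · intro x hx
          rw [Multiset.mem_map] at hx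
          obtain ⟨y, hy, rfl⟩ := hx
          have h1 : |y| ≤ (s.map abs).sum :=
            Multiset.single_le_sum (by
              intro x hx
              rw [Multiset.mem_map] at hx
              obtain ⟨z, _, rfl⟩ := hx
              exact abs_nonneg z) _ (Multiset.mem_map_of_mem _ hy)
          have h2 : -y ≤ |y| := neg_le_abs y
          rw [hT]
          linarith
        · simp only [Multiset.card_map]
          omega
      -- conclude by the intermediate value theorem
      have hg0 : 0 < g 0 := by
        rcases lt_trichotomy (g 0) 0 with hneg | hzero | hpos
        · exfalso
          have hsub : Set.Icc (g 0) (g T) ⊆ g '' Set.Icc 0 T :=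
            intermediate_value_Icc hT0 hgcont.continuousOn
          have h0mem : (0:ℝ) ∈ Set.Icc (g 0) (g T) := ⟨hneg.le, hgT.le⟩
          obtain ⟨t, ht, hgt⟩ := hsub h0mem
          exact hgne t ht.1 hgt
        · exact absurd hzero (hgne 0 le_rfl)
        · exact hpos
      have : g 0 = s.esymm (k - 1) := by
        rw [← hgg 0]
        congr 1
        rw [show ((· + (0:ℝ)) = id) from funext fun x => add_zero x, Multiset.map_id]
      rwa [this] at hg0


lemma esymmZ_eq (n : ℕ) (m : ℕ) (lam : Fin n → ℝ) :
    esymmZ n (m : ℤ) lam = (Finset.univ.val.map lam).esymm m := by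
  rw [esymmZ, if_neg (by omega : ¬ ((m : ℤ) < 0)), Finset.esymm_map_val]
  norm_num

lemma esymmZ_zero (n : ℕ) (lam : Fin n → ℝ) : esymmZ n 0 lam = 1 := by
  rw [esymmZ, if_neg (by omega : ¬ ((0 : ℤ) < 0))]
  simp

lemma card_mylam (n : ℕ) (lam : Fin n → ℝ) :
    Multiset.card (Finset.univ.val.map lam) = n := by
  simp

lemma SZ_eq (n : ℕ) (α : ℝ) (m : ℕ) (hm : 1 ≤ m) (lam : Fin n → ℝ) :
    SZ n α (m : ℤ) lam = (α ::ₘ Finset.univ.val.map lam).esymm m := by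
  rw [SZ, esymm_cons' α _ m hm, esymmZ_eq]
  have e : (m : ℤ) - 1 = ((m - 1 : ℕ) : ℤ) := by omega
  rw [e, esymmZ_eq]


end GTaux

open GTaux in
theorem gammaTilde_eq_all_S_pos
    (n : ℕ) (hn : 2 ≤ n) (k : ℕ) (hk1 : 1 ≤ k) (hk : k ≤ n)
    (α : ℝ) (hα : 0 < α) :
    GammaTilde n α k = {lam : Fin n → ℝ | ∀ m : ℕ, 1 ≤ m → m ≤ k → 0 < SZ n α m lam} := by
  ext lam
  simp only [GammaTilde, Gamma, Set.mem_inter_iff, Set.mem_setOf_eq]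
  constructor
  · rintro ⟨h1, h2⟩ m hm1 hm2
    rcases Nat.eq_or_lt_of_le hm2 with rfl | hlt
    · exact h2
    · rw [SZ]
      have hpos1 : 0 < esymmZ n (m : ℤ) lam := h1 m hm1 (by omega)
      have hpos2 : 0 < esymmZ n ((m : ℤ) - 1) lam := by
        rcases Nat.eq_or_lt_of_le hm1 with rfl | hm2'
        · norm_num [esymmZ_zero]
        · have e : (m : ℤ) - 1 = ((m - 1 : ℕ) : ℤ) := by omega
          rw [e]
          exact h1 (m - 1) (by omega) (by omega)
      positivity
  · intro h
    have H : ∀ m, 1 ≤ m → m ≤ k → 0 < (α ::ₘ Finset.univ.val.map lam).esymm m := by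
      intro m hm1 hm2
      rw [← SZ_eq n α m hm1 lam]
      exact h m hm1 hm2
    constructor
    · intro j hj1 hj2
      rw [esymmZ_eq]
      exact key k (Finset.univ.val.map lam) α hα (by rw [card_mylam]; omega) H j hj1 hj2
    · exact h k hk1 le_rfl
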